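/- For v(x) := c − √(R² − |x|²) defined on the open ball B_R(0) ⊂ ℝⁿ, the upward normal N(x) = (1+|∇v|²)^{-1/2}(−∇v(x), 1) equals (−x/R, √(R²−|x|²)/R), and for any symmetric (n+1)×(n+1) matrix function G satisfying G(p)p = 0, tG(tp) = G(p) for t > 0, the quantity Σᵢⱼ G_{ij}(−∇v(x),1) ∂ᵢⱼv(x) equals (1/R)·tr G(N(x)). -/

import Mathlib

open Matrix BigOperators

lemma dot_hasFDerivAt {n : ℕ} (y : Fin n → ℝ) :
    HasFDerivAt (fun z : Fin n → ℝ => z ⬝ᵥ z)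
      (∑ i, (2 * y i) • ContinuousLinearMap.proj (R := ℝ) (φ := fun _ : Fin n => ℝ) i) y := by
  have h : ∀ i ∈ Finset.univ, HasFDerivAt (fun z : Fin n → ℝ => z i * z i)
      ((2 * y i) • ContinuousLinearMap.proj (R := ℝ) (φ := fun _ : Fin n => ℝ) i) y := by
    intro i _
    have hp : HasFDerivAt (fun z : Fin n → ℝ => z i)
        (ContinuousLinearMap.proj (R := ℝ) (φ := fun _ : Fin n => ℝ) i) y := by
      exact ContinuousLinearMap.hasFDerivAt
        (ContinuousLinearMap.proj (R := ℝ) (φ := fun _ : Fin n => ℝ) i)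
    have := hp.fun_mul hp
    rw [two_mul, add_smul]
    exact this
  have := HasFDerivAt.fun_sum h
  simpa [dotProduct] using this

lemma q_hasFDerivAt {n : ℕ} (R : ℝ) (y : Fin n → ℝ) :
    HasFDerivAt (fun z : Fin n → ℝ => R ^ 2 - z ⬝ᵥ z)
      (-∑ i, (2 * y i) • ContinuousLinearMap.proj (R := ℝ) (φ := fun _ : Fin n => ℝ) i) y := by
  simpa [zero_sub] using (hasFDerivAt_const (R ^ 2) y).fun_sub (dot_hasFDerivAt y)

lemma Dq_apply {n : ℕ} (y : Fin n → ℝ) (j : Fin n) :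
    (∑ i, (2 * y i) • ContinuousLinearMap.proj (R := ℝ) (φ := fun _ : Fin n => ℝ) i)
      (Pi.single j 1) = 2 * y j := by
  simp [ContinuousLinearMap.sum_apply, ContinuousLinearMap.proj_apply, Pi.single_apply,
    mul_ite, mul_one, mul_zero, Finset.sum_ite_eq]

lemma v_hasFDerivAt {n : ℕ} {R c : ℝ} {v : (Fin n → ℝ) → ℝ}
    (hv : ∀ x : Fin n → ℝ, v x = c - Real.sqrt (R ^ 2 - x ⬝ᵥ x))
    {y : Fin n → ℝ} (hy : y ⬝ᵥ y < R ^ 2) :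
    HasFDerivAt v ((1 / (2 * Real.sqrt (R ^ 2 - y ⬝ᵥ y))) •
      (∑ i, (2 * y i) • ContinuousLinearMap.proj (R := ℝ) (φ := fun _ : Fin n => ℝ) i)) y := by
  have hq : (0:ℝ) < R ^ 2 - y ⬝ᵥ y := by linarith
  have hsq : HasDerivAt Real.sqrt (1 / (2 * Real.sqrt (R ^ 2 - y ⬝ᵥ y))) (R ^ 2 - y ⬝ᵥ y) :=
    Real.hasDerivAt_sqrt hq.ne'
  have hcomp := hsq.comp_hasFDerivAt y (q_hasFDerivAt R y)
  have hveq : v = fun z : Fin n → ℝ => c - Real.sqrt (R ^ 2 - z ⬝ᵥ z) := funext hv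
  rw [hveq]
  have h2 := (hasFDerivAt_const c y).fun_sub hcomp
  rw [zero_sub, smul_neg, neg_neg] at h2
  exact h2

lemma fderiv_v {n : ℕ} {R c : ℝ} {v : (Fin n → ℝ) → ℝ}
    (hv : ∀ x : Fin n → ℝ, v x = c - Real.sqrt (R ^ 2 - x ⬝ᵥ x))
    {y : Fin n → ℝ} (hy : y ⬝ᵥ y < R ^ 2) (j : Fin n) :
    fderiv ℝ v y (Pi.single j 1) = y j * (Real.sqrt (R ^ 2 - y ⬝ᵥ y))⁻¹ := by
  have hq : (0:ℝ) < R ^ 2 - y ⬝ᵥ y := by linarith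
  have hs : 0 < Real.sqrt (R ^ 2 - y ⬝ᵥ y) := Real.sqrt_pos.mpr hq
  rw [(v_hasFDerivAt hv hy).fderiv, ContinuousLinearMap.smul_apply, Dq_apply]
  simp only [smul_eq_mul]
  field_simp

lemma inv_sqrt_hasFDerivAt {n : ℕ} {R : ℝ} {y : Fin n → ℝ} (hy : y ⬝ᵥ y < R ^ 2) :
    HasFDerivAt (fun z : Fin n → ℝ => (Real.sqrt (R ^ 2 - z ⬝ᵥ z))⁻¹)
      ((-(Real.sqrt (R ^ 2 - y ⬝ᵥ y) ^ 2)⁻¹ * (1 / (2 * Real.sqrt (R ^ 2 - y ⬝ᵥ y)))) •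
        (-∑ i, (2 * y i) • ContinuousLinearMap.proj (R := ℝ) (φ := fun _ : Fin n => ℝ) i)) y := by
  have hq : (0:ℝ) < R ^ 2 - y ⬝ᵥ y := by linarith
  have hs : 0 < Real.sqrt (R ^ 2 - y ⬝ᵥ y) := Real.sqrt_pos.mpr hq
  have hsq : HasDerivAt Real.sqrt (1 / (2 * Real.sqrt (R ^ 2 - y ⬝ᵥ y))) (R ^ 2 - y ⬝ᵥ y) :=
    Real.hasDerivAt_sqrt hq.ne'
  have hinv : HasDerivAt (fun a : ℝ => a⁻¹) (-(Real.sqrt (R ^ 2 - y ⬝ᵥ y) ^ 2)⁻¹)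
      (Real.sqrt (R ^ 2 - y ⬝ᵥ y)) := hasDerivAt_inv hs.ne'
  have hcomp : HasDerivAt (fun a : ℝ => (Real.sqrt a)⁻¹)
      (-(Real.sqrt (R ^ 2 - y ⬝ᵥ y) ^ 2)⁻¹ * (1 / (2 * Real.sqrt (R ^ 2 - y ⬝ᵥ y))))
      (R ^ 2 - y ⬝ᵥ y) := hinv.comp _ hsq
  have := hcomp.comp_hasFDerivAt y (q_hasFDerivAt R y); exact this

lemma fderiv2_v {n : ℕ} {R c : ℝ} {v : (Fin n → ℝ) → ℝ}
    (hv : ∀ x : Fin n → ℝ, v x = c - Real.sqrt (R ^ 2 - x ⬝ᵥ x))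
    {y : Fin n → ℝ} (hy : y ⬝ᵥ y < R ^ 2) (i j : Fin n) :
    fderiv ℝ (fun z => fderiv ℝ v z (Pi.single j 1)) y (Pi.single i 1)
      = (if i = j then (Real.sqrt (R ^ 2 - y ⬝ᵥ y))⁻¹ else 0)
        + y i * y j / Real.sqrt (R ^ 2 - y ⬝ᵥ y) ^ 3 := by
  have hq : (0:ℝ) < R ^ 2 - y ⬝ᵥ y := by linarith
  set s := Real.sqrt (R ^ 2 - y ⬝ᵥ y) with hsdef
  have hs : 0 < s := Real.sqrt_pos.mpr hq
  -- the set U is open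
  have hUopen : IsOpen {z : Fin n → ℝ | z ⬝ᵥ z < R ^ 2} := by
    have hcont : Continuous fun z : Fin n → ℝ => z ⬝ᵥ z := by
      simp only [dotProduct]
      exact continuous_finset_sum _ fun i _ => (continuous_apply i).mul (continuous_apply i)
    exact isOpen_lt hcont continuous_const
  have hev : (fun z : Fin n → ℝ => z j * (Real.sqrt (R ^ 2 - z ⬝ᵥ z))⁻¹)
      =ᶠ[nhds y] fun z => fderiv ℝ v z (Pi.single j 1) := by
    filter_upwards [hUopen.mem_nhds hy] with z hz
    exact (fderiv_v hv hz j).symm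
  rw [← hev.fderiv_eq]
  -- derivative of the explicit function
  have hp : HasFDerivAt (fun z : Fin n → ℝ => z j)
      (ContinuousLinearMap.proj (R := ℝ) (φ := fun _ : Fin n => ℝ) j) y :=
    ContinuousLinearMap.hasFDerivAt
      (ContinuousLinearMap.proj (R := ℝ) (φ := fun _ : Fin n => ℝ) j)
  have hw := inv_sqrt_hasFDerivAt hy
  have hmul := hp.fun_mul hw
  rw [hmul.fderiv]
  rw [ContinuousLinearMap.add_apply, ContinuousLinearMap.smul_apply,
    ContinuousLinearMap.smul_apply, ContinuousLinearMap.smul_apply,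
    ContinuousLinearMap.neg_apply, Dq_apply, ContinuousLinearMap.proj_apply]
  rw [Pi.single_apply]
  have hs2 : s ^ 2 = R ^ 2 - y ⬝ᵥ y := Real.sq_sqrt hq.le
  by_cases hij : i = j
  · subst hij; simp; field_simp
    ring
  · have hji : ¬ j = i := fun h => hij h.symm
    simp [hij, hji]; field_simp
    ring


/-- Weighted mean curvature of a lower spherical cap: for
`v(x) = c − √(R² − |x|²)` on the ball of radius `R`, the upward normal is
`(−x/R, √(R²−|x|²)/R)` and `Σᵢⱼ G_{ij}(−∇v,1) ∂ᵢⱼv = (1/R)·tr G(N)` for any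
symmetric weight matrix `G` with `G(p)p = 0` and `tG(tp) = G(p)` for `t > 0`. -/
theorem spherical_cap_weighted_mean_curvature
    (n : ℕ) (R c : ℝ) (hR : 0 < R)
    (v : (Fin n → ℝ) → ℝ)
    (hv : ∀ x : Fin n → ℝ, v x = c - Real.sqrt (R ^ 2 - x ⬝ᵥ x))
    (G : (Fin (n + 1) → ℝ) → Matrix (Fin (n + 1)) (Fin (n + 1)) ℝ)
    (hsymm : ∀ p : Fin (n + 1) → ℝ, p ≠ 0 → (G p).IsSymm)
    (hker : ∀ p : Fin (n + 1) → ℝ, p ≠ 0 → (G p).mulVec p = 0)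
    (hhom : ∀ p : Fin (n + 1) → ℝ, p ≠ 0 → ∀ t : ℝ, 0 < t → t • G (t • p) = G p)
    (x : Fin n → ℝ) (hx : x ⬝ᵥ x < R ^ 2)
    (gradv : Fin n → ℝ) (hgrad : ∀ i, gradv i = fderiv ℝ v x (Pi.single i 1))
    (N : Fin (n + 1) → ℝ)
    (hN : N = (Real.sqrt (1 + gradv ⬝ᵥ gradv))⁻¹ •
      (Fin.snoc (fun i => -gradv i) 1 : Fin (n + 1) → ℝ)) :
    N = (Fin.snoc (fun i => -x i / R) (Real.sqrt (R ^ 2 - x ⬝ᵥ x) / R) :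
        Fin (n + 1) → ℝ) ∧
    ∑ i : Fin n, ∑ j : Fin n,
        G (Fin.snoc (fun k => -gradv k) 1 : Fin (n + 1) → ℝ) i.castSucc j.castSucc *
          fderiv ℝ (fun y => fderiv ℝ v y (Pi.single j 1)) x (Pi.single i 1)
      = (1 / R) * (G N).trace := by
  have hq : (0:ℝ) < R ^ 2 - x ⬝ᵥ x := by linarith
  set s := Real.sqrt (R ^ 2 - x ⬝ᵥ x) with hsdef
  have hs : 0 < s := Real.sqrt_pos.mpr hq
  have hs2 : s ^ 2 = R ^ 2 - x ⬝ᵥ x := Real.sq_sqrt hq.le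
  have hgradv : ∀ i, gradv i = x i * s⁻¹ := fun i => by rw [hgrad i, fderiv_v hv hx i]
  have hdot : gradv ⬝ᵥ gradv = (x ⬝ᵥ x) * (s⁻¹) ^ 2 := by
    simp only [dotProduct, hgradv]
    rw [Finset.sum_mul]
    exact Finset.sum_congr rfl fun i _ => by ring
  have h1g : 1 + gradv ⬝ᵥ gradv = R ^ 2 / s ^ 2 := by
    rw [hdot, inv_pow, hs2]
    field_simp
    ring
  have hsqrt1g : Real.sqrt (1 + gradv ⬝ᵥ gradv) = R / s := by
    rw [h1g, show R ^ 2 / s ^ 2 = (R / s) ^ 2 by ring]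
    exact Real.sqrt_sq (by positivity)
  set p : Fin (n + 1) → ℝ := (Fin.snoc (fun k => -gradv k) 1 : Fin (n + 1) → ℝ) with hpdef
  have hpeq : (Fin.snoc (fun i => -gradv i) 1 : Fin (n + 1) → ℝ) = p := rfl
  have hNval : N = (s / R) • p := by
    rw [hN, hsqrt1g, inv_div]
  have hgoal1 : N = (Fin.snoc (fun i => -x i / R) (s / R) : Fin (n + 1) → ℝ) := by
    rw [hNval]; funext k
    refine Fin.lastCases ?_ ?_ k
    · simp [hpdef, Fin.snoc_last]
    · intro i
      simp only [Pi.smul_apply, hpdef, Fin.snoc_castSucc, smul_eq_mul, hgradv i]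
      field_simp
  have hp0 : p ≠ 0 := by
    intro h
    have h1 := congrFun h (Fin.last n)
    simp [hpdef, Fin.snoc_last] at h1
  have hsR : s / R ≠ 0 := div_ne_zero hs.ne' hR.ne'
  have hN0 : N ≠ 0 := by
    intro h
    have h1 := congrFun h (Fin.last n)
    rw [hgoal1] at h
    have h2 := congrFun h (Fin.last n)
    simp [Fin.snoc_last] at h2
    rcases h2 with h | h
    · exact hs.ne' h
    · exact hR.ne' h
  have hGp : G p = (s / R) • G N := by
    have h := hhom p hp0 (s / R) (div_pos hs hR)
    rw [← hNval] at h
    exact h.symm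
  have hNc : ∀ j : Fin n, N j.castSucc = -x j / R := fun j => by
    rw [hgoal1]; simp [Fin.snoc_castSucc]
  have hNl : N (Fin.last n) = s / R := by rw [hgoal1]; simp [Fin.snoc_last]
  have hrow : ∀ k : Fin (n + 1),
      ∑ j : Fin n, (G N) k j.castSucc * x j = s * (G N) k (Fin.last n) := by
    intro k
    have h0 := congrFun (hker N hN0) k
    have h1 : ∑ j : Fin (n + 1), (G N) k j * N j = 0 := by
      simpa [Matrix.mulVec, dotProduct] using h0
    rw [Fin.sum_univ_castSucc] at h1
    simp only [hNc, hNl] at h1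
    have h2 : ∑ j : Fin n, (G N) k j.castSucc * (-x j / R)
        = -((∑ j : Fin n, (G N) k j.castSucc * x j) / R) := by
      rw [Finset.sum_div, ← Finset.sum_neg_distrib]
      exact Finset.sum_congr rfl fun j _ => by ring
    rw [h2] at h1
    field_simp at h1
    have h3 : (∑ j : Fin n, (G N) k j.castSucc * x j) * R
        = (s * (G N) k (Fin.last n)) * R := by linear_combination (-R) * h1
    exact mul_right_cancel₀ hR.ne' h3
  have hsy : ∀ a b, (G N) a b = (G N) b a := fun a b => ((hsymm N hN0).apply a b).symm
  refine ⟨hgoal1, ?_⟩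
  have hinner : ∀ i : Fin n,
      ∑ j : Fin n, G p i.castSucc j.castSucc *
          fderiv ℝ (fun y => fderiv ℝ v y (Pi.single j 1)) x (Pi.single i 1)
        = (1 / R) * (G N) i.castSucc i.castSucc
          + (1 / (R * s)) * (x i * (G N) i.castSucc (Fin.last n)) := by
    intro i
    have hstep : ∀ j : Fin n, G p i.castSucc j.castSucc *
          fderiv ℝ (fun y => fderiv ℝ v y (Pi.single j 1)) x (Pi.single i 1)
        = ((s / R) * (G N) i.castSucc j.castSucc) * (if i = j then s⁻¹ else 0)
          + ((s / R) * (G N) i.castSucc j.castSucc) * (x i * x j / s ^ 3) := by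
      intro j
      rw [fderiv2_v hv hx i j, hGp, Matrix.smul_apply, smul_eq_mul, mul_add]
    rw [Finset.sum_congr rfl fun j _ => hstep j, Finset.sum_add_distrib]
    have hA : ∑ j : Fin n, ((s / R) * (G N) i.castSucc j.castSucc) * (if i = j then s⁻¹ else 0)
        = (s / R) * (G N) i.castSucc i.castSucc * s⁻¹ := by
      simp [mul_ite, mul_zero, Finset.sum_ite_eq]
    have hB : ∑ j : Fin n, ((s / R) * (G N) i.castSucc j.castSucc) * (x i * x j / s ^ 3)
        = (s / R) * (∑ j : Fin n, (G N) i.castSucc j.castSucc * x j) * (x i / s ^ 3) := by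
      rw [Finset.mul_sum, Finset.sum_mul]
      exact Finset.sum_congr rfl fun j _ => by ring
    rw [hA, hB, hrow i.castSucc]
    field_simp
  rw [Finset.sum_congr rfl fun i _ => hinner i, Finset.sum_add_distrib,
    ← Finset.mul_sum, ← Finset.mul_sum]
  have hC : ∑ i : Fin n, x i * (G N) i.castSucc (Fin.last n) = s * (G N) (Fin.last n) (Fin.last n) := by
    rw [Finset.sum_congr rfl fun i _ => by rw [hsy i.castSucc (Fin.last n), mul_comm]]
    exact hrow (Fin.last n)
  rw [hC]
  have htr : (G N).trace = (∑ i : Fin n, (G N) i.castSucc i.castSucc)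
      + (G N) (Fin.last n) (Fin.last n) := by
    rw [Matrix.trace]
    simp only [Matrix.diag]
    rw [Fin.sum_univ_castSucc]
  rw [htr]
  field_simp
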